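/- Let f and g be polynomials with rational coefficients, with g nonzero, and suppose the rational number f(r)/g(r) is an integer for infinitely many positive integers r. Then there exists a polynomial h with rational coefficients such that f(r)/g(r) = h(r) for all sufficiently large integers r for which g(r) ≠ 0, i.e., g divides f in ℚ[x]. Moreover deg h = deg f − deg g. -/

import Mathlib

open Polynomial Filter

private lemma exists_den_aux (q : Polynomial ℚ) :
    ∃ D : ℕ, 0 < D ∧ ∀ n : ℕ, ∃ z : ℤ, (D : ℚ) * q.eval (n : ℚ) = z := by
  induction q using Polynomial.induction_on' with
  | monomial k a =>
      refine ⟨a.den, a.pos, fun n => ⟨a.num * n ^ k, ?_⟩⟩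
      rw [eval_monomial]
      push_cast
      rw [← mul_assoc]
      congr 1
      rw [mul_comm]
      exact_mod_cast Rat.mul_den_eq_num a
  | add p q hp hq =>
      obtain ⟨D1, hD1, h1⟩ := hp
      obtain ⟨D2, hD2, h2⟩ := hq
      refine ⟨D1 * D2, Nat.mul_pos hD1 hD2, fun n => ?_⟩
      obtain ⟨z1, hz1⟩ := h1 n
      obtain ⟨z2, hz2⟩ := h2 n
      refine ⟨D2 * z1 + D1 * z2, ?_⟩
      rw [eval_add]
      push_cast
      rw [← hz1, ← hz2]
      ring

theorem stmt5 (f g : Polynomial ℚ) (hg : g ≠ 0)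
    (h : {r : ℕ | 0 < r ∧ ∃ z : ℤ, f.eval (r : ℚ) / g.eval (r : ℚ) = (z : ℚ)}.Infinite) :
    g ∣ f ∧ ∃ h' : Polynomial ℚ,
      f = g * h' ∧
      (∀ᶠ r : ℕ in Filter.atTop, g.eval (r : ℚ) ≠ 0 →
        f.eval (r : ℚ) / g.eval (r : ℚ) = h'.eval (r : ℚ)) ∧
      h'.natDegree = f.natDegree - g.natDegree := by
  classical
  set q : Polynomial ℚ := f / g with hq
  set r : Polynomial ℚ := f % g with hr
  have hfr : g * q + r = f := EuclideanDomain.div_add_mod f g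
  have hdegr : r.degree < g.degree := EuclideanDomain.mod_lt f hg
  obtain ⟨D, hD, hDq⟩ := exists_den_aux q
  set φ : ℚ →+* ℝ := Rat.castHom ℝ with hφ
  have heval : ∀ (p : Polynomial ℚ) (n : ℕ),
      (p.map φ).eval (n : ℝ) = ((p.eval (n : ℚ) : ℚ) : ℝ) := by
    intro p n
    rw [show ((n : ℕ) : ℝ) = φ ((n : ℚ)) by simp [hφ], eval_map, eval₂_at_apply]
    simp [hφ]
  have hmapdeg : (r.map φ).degree < (g.map φ).degree := by
    rwa [degree_map, degree_map]
  have htend : Tendsto (fun n : ℕ => ((r.map φ).eval (n : ℝ)) / ((g.map φ).eval (n : ℝ)))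
      atTop (nhds 0) :=
    (Polynomial.div_tendsto_zero_of_degree_lt _ _ hmapdeg).comp tendsto_natCast_atTop_atTop
  have hDpos : (0 : ℝ) < 1 / D := by positivity
  have hsmall : ∀ᶠ n : ℕ in atTop, |r.eval (n : ℚ) / g.eval (n : ℚ)| < 1 / D := by
    have h1 := Metric.tendsto_nhds.mp htend (1 / D) hDpos
    filter_upwards [h1] with n hn
    rw [Real.dist_eq, sub_zero, heval, heval, ← Rat.cast_div, ← Rat.cast_abs,
      show (1 / (D : ℝ)) = ((1 / (D : ℚ) : ℚ) : ℝ) by push_cast; ring, Rat.cast_lt] at hn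
    exact hn
  have hgne : ∀ᶠ n : ℕ in atTop, g.eval (n : ℚ) ≠ 0 := by
    rw [← Nat.cofinite_eq_atTop]
    have hfin : {n : ℕ | g.eval (n : ℚ) = 0}.Finite := by
      have : {n : ℕ | g.eval (n : ℚ) = 0} = (Nat.cast : ℕ → ℚ) ⁻¹' {x | g.IsRoot x} := rfl
      rw [this]
      exact Set.Finite.preimage Nat.cast_injective.injOn (Polynomial.finite_setOf_isRoot hg)
    exact hfin.eventually_cofinite_notMem
  have hfreq : ∃ᶠ n : ℕ in atTop,
      0 < n ∧ ∃ z : ℤ, f.eval (n : ℚ) / g.eval (n : ℚ) = (z : ℚ) :=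
    Nat.frequently_atTop_iff_infinite.mpr h
  have hroot : ∃ᶠ n : ℕ in atTop, r.eval (n : ℚ) = 0 := by
    refine (hfreq.and_eventually (hsmall.and hgne)).mono ?_
    rintro n ⟨⟨-, z, hz⟩, hsm, hgn⟩
    obtain ⟨w, hw⟩ := hDq n
    have hfn : f.eval (n : ℚ) = z * g.eval (n : ℚ) := by
      field_simp at hz; linarith [hz]
    have hre : r.eval (n : ℚ) = f.eval (n : ℚ) - g.eval (n : ℚ) * q.eval (n : ℚ) := by
      have := congrArg (fun p => Polynomial.eval (n : ℚ) p) hfr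
      simp only [eval_add, eval_mul] at this
      linarith [this]
    have key : (D : ℚ) * r.eval (n : ℚ) = g.eval (n : ℚ) * ((D : ℤ) * z - w) := by
      rw [hre, hfn]
      push_cast
      rw [← hw]
      ring
    have hqZ : ((D : ℤ) * z - w : ℚ) = (D : ℚ) * (r.eval (n : ℚ) / g.eval (n : ℚ)) := by
      rw [mul_div_assoc']
      field_simp
      rw [key]; push_cast; ring
    have habs : |((D : ℤ) * z - w : ℚ)| < 1 := by
      rw [hqZ, abs_mul, abs_of_nonneg (by positivity : (0:ℚ) ≤ (D:ℚ))]
      calc (D : ℚ) * |r.eval (n : ℚ) / g.eval (n : ℚ)| < (D : ℚ) * (1 / D) := by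
            exact mul_lt_mul_of_pos_left hsm (by exact_mod_cast hD)
        _ = 1 := by field_simp
    have hint2 : ((D : ℤ) * z - w) = 0 := by
      have h1 : |(D : ℤ) * z - w| < 1 := by exact_mod_cast habs
      rw [abs_lt] at h1
      omega
    have hint : (((D : ℤ) : ℚ) * z - w : ℚ) = 0 := by exact_mod_cast congrArg (fun t : ℤ => (t : ℚ)) hint2
    have : (D : ℚ) * r.eval (n : ℚ) = 0 := by rw [key, hint, mul_zero]
    have hDne : (D : ℚ) ≠ 0 := by exact_mod_cast hD.ne'
    exact (mul_eq_zero.mp this).resolve_left hDne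
  have hr0 : r = 0 := by
    apply Polynomial.eq_zero_of_infinite_isRoot
    have hinf : {n : ℕ | r.eval (n : ℚ) = 0}.Infinite :=
      Nat.frequently_atTop_iff_infinite.mp hroot
    apply Set.Infinite.mono ?_ (hinf.image (Nat.cast_injective.injOn))
    rintro x ⟨n, hn, rfl⟩
    exact hn
  have hf : f = g * q := by rw [← hfr, hr0, add_zero]
  refine ⟨⟨q, hf⟩, q, hf, ?_, ?_⟩
  · exact Filter.Eventually.of_forall fun n hgn => by
      rw [hf, eval_mul, mul_div_cancel_left₀ _ hgn]
  · by_cases hf0 : f = 0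
    · have hq0 : q = 0 := by
        have := hf
        rw [hf0] at this
        exact (mul_eq_zero.mp this.symm).resolve_left hg
      simp [hq0, hf0]
    · have hq0 : q ≠ 0 := fun hq0 => hf0 (by rw [hf, hq0, mul_zero])
      have := Polynomial.natDegree_mul hg hq0
      rw [← hf] at this
      omega
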